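/- Fix an integer N ≥ 2, an integer r > 2, and a real p₁ with 0 < p₁ < 1. Let p be the probability vector on Fin r with p 0 = p₁ and p i = (1 - p₁)/(r - 1) for i ≠ 0, and set p* = (2 + √(2·(r-1)·(r-2)))/(2·r). For an integer c ≥ 2, let R(p,c) = 1 - (N/(2·(N-1))) · VI₂(p, u_c) denote the Rand index between the ground truth and a statistically independent balanced candidate partition with c clusters, where u_c is the uniform probability vector on Fin c. Then: (1) if p₁ > p*, then R(p,·) is strictly decreasing in c; (2) if p₁ = p*, then R(p,·) is constant in c; (3) if p₁ < p*, then R(p,·) is strictly increasing in c. -/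

import Mathlib

set_option maxHeartbeats 2000000


/-- The quadratic entropy of a finitely supported probability vector. -/
noncomputable def quadEntropy {α : Type*} [Fintype α] (x : α → ℝ) : ℝ :=
  2 * (1 - ∑ i, (x i) ^ 2)

/-- The quadratic variation of information between (the distributions of)
two statistically independent partitions. -/
noncomputable def VI2 {α β : Type*} [Fintype α] [Fintype β] (p : α → ℝ) (q : β → ℝ) : ℝ :=
  2 * quadEntropy (fun ij : α × β => p ij.1 * q ij.2) - quadEntropy p - quadEntropy q

/-- The uniform (balanced) probability vector on `Fin c`. -/
noncomputable def unif (c : ℕ) : Fin c → ℝ := fun _ => 1 / (c : ℝ)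

/-- The (expected) Rand index between a ground-truth distribution `p` and a
statistically independent balanced candidate partition with `c` clusters. -/
noncomputable def randGT (N : ℕ) {r : ℕ} (p : Fin r → ℝ) (c : ℕ) : ℝ :=
  1 - ((N : ℝ) / (2 * ((N : ℝ) - 1))) * VI2 p (unif c)

theorem randGT_bias_skewed_ground_truth {N r : ℕ} [NeZero r] (hN : 2 ≤ N) (hr : 2 < r)
    (p₁ : ℝ) (hp₁ : 0 < p₁) (hp₁' : p₁ < 1)
    (p : Fin r → ℝ) (hp0 : p 0 = p₁) (hpi : ∀ i : Fin r, i ≠ 0 → p i = (1 - p₁) / ((r : ℝ) - 1)) :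
    ((2 + Real.sqrt (2 * ((r : ℝ) - 1) * ((r : ℝ) - 2))) / (2 * (r : ℝ)) < p₁ →
      ∀ c c' : ℕ, 2 ≤ c → c < c' → randGT N p c' < randGT N p c) ∧
    (p₁ = (2 + Real.sqrt (2 * ((r : ℝ) - 1) * ((r : ℝ) - 2))) / (2 * (r : ℝ)) →
      ∀ c c' : ℕ, 2 ≤ c → 2 ≤ c' → randGT N p c = randGT N p c') ∧
    (p₁ < (2 + Real.sqrt (2 * ((r : ℝ) - 1) * ((r : ℝ) - 2))) / (2 * (r : ℝ)) →
      ∀ c c' : ℕ, 2 ≤ c → c < c' → randGT N p c < randGT N p c') := by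
  have hrR : (3:ℝ) ≤ (r:ℝ) := by exact_mod_cast hr
  set s := Real.sqrt (2 * ((r : ℝ) - 1) * ((r : ℝ) - 2)) with hsdef
  have hs2 : s ^ 2 = 2 * ((r : ℝ) - 1) * ((r : ℝ) - 2) := by
    rw [hsdef, Real.sq_sqrt]; nlinarith
  have hsnn : 0 ≤ s := Real.sqrt_nonneg _
  clear_value s
  have hsge : 2 ≤ s := by
    nlinarith [hs2, hsnn, mul_nonneg (show (0:ℝ) ≤ (r:ℝ) - 3 by linarith)
      (show (0:ℝ) ≤ (r:ℝ) by linarith)]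
  set S := ∑ i, (p i) ^ 2 with hSdef
  -- compute S
  have hScomp : S = p₁ ^ 2 + ((r : ℝ) - 1) * ((1 - p₁) / ((r : ℝ) - 1)) ^ 2 := by
    rw [hSdef, ← Finset.add_sum_erase _ _ (Finset.mem_univ (0 : Fin r)), hp0]
    congr 1
    rw [Finset.sum_congr rfl (fun i hi => by
      rw [hpi i (Finset.ne_of_mem_erase hi)]), Finset.sum_const,
      Finset.card_erase_of_mem (Finset.mem_univ _), Finset.card_univ, Fintype.card_fin,
      nsmul_eq_mul]
    congr 1
    have h1r : 1 ≤ r := by omega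
    push_cast [Nat.cast_sub h1r]
    ring
  clear_value S
  have hr1 : ((r:ℝ) - 1) ≠ 0 := by intro h; nlinarith
  have e : ((r:ℝ) - 1) * S = ((r:ℝ) - 1) * p₁ ^ 2 + (1 - p₁) ^ 2 := by
    rw [hScomp]; field_simp
  -- the key sign identity
  have hkey : 4 * (r:ℝ) * ((r:ℝ) - 1) * (S - 1/2) =
      (2 * (r:ℝ) * p₁ - (2 + s)) * (2 * (r:ℝ) * p₁ - (2 - s)) := by
    linear_combination 4 * (r:ℝ) * e + hs2
  have hK : 0 < (N : ℝ) / (2 * ((N : ℝ) - 1)) := by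
    have : (2:ℝ) ≤ (N:ℝ) := by exact_mod_cast hN
    have h1 : 0 < (N:ℝ) := by linarith
    have h2 : 0 < 2 * ((N:ℝ) - 1) := by linarith
    positivity
  have hrand : ∀ c : ℕ, 2 ≤ c →
      randGT N p c = 1 - ((N : ℝ) / (2 * ((N : ℝ) - 1))) * (2 * S + (2 - 4 * S) / (c:ℝ)) := by
    intro c hc
    have hcpos : 0 < c := by omega
    have hc0 : (c:ℝ) ≠ 0 := by exact_mod_cast hcpos.ne'
    unfold randGT VI2 quadEntropy
    have hsum_u : ∑ j : Fin c, (unif c j) ^ 2 = 1 / (c:ℝ) := by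
      simp only [unif, Finset.sum_const, Finset.card_univ, Fintype.card_fin, nsmul_eq_mul]
      field_simp
    have hsum_prod : ∑ ij : Fin r × Fin c, (p ij.1 * unif c ij.2) ^ 2 = S * (1 / (c:ℝ)) := by
      rw [Fintype.sum_prod_type]
      simp_rw [mul_pow, ← Finset.mul_sum, hsum_u, ← Finset.sum_mul]
      rw [← hSdef]
    rw [hsum_prod, hsum_u, ← hSdef]
    field_simp
    ring
  have hrpos : (0:ℝ) < (r:ℝ) := by linarith
  clear hpi hp0 hScomp hSdef e
  refine ⟨?_, ?_, ?_⟩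
  · intro h c c' hc hcc'
    have hc' : 2 ≤ c' := by omega
    have hcR : (2:ℝ) ≤ (c:ℝ) := by exact_mod_cast hc
    have hccR : (c:ℝ) < (c':ℝ) := by exact_mod_cast hcc'
    have hA : 2 + s < p₁ * (2 * (r:ℝ)) := (div_lt_iff₀ (by linarith)).mp h
    have hB : 0 < 2 * (r:ℝ) * p₁ - (2 - s) := by nlinarith
    have hS12 : 1/2 < S := by
      nlinarith [mul_pos (show (0:ℝ) < 2 * (r:ℝ) * p₁ - (2 + s) by linarith) hB,
        mul_pos (show (0:ℝ) < 4 * (r:ℝ) by linarith) (show (0:ℝ) < (r:ℝ) - 1 by linarith)]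
    rw [hrand c hc, hrand c' hc']
    have hdiv : (2 - 4 * S) / (c:ℝ) < (2 - 4 * S) / (c':ℝ) := by
      rw [div_lt_div_iff₀ (by linarith) (by linarith)]
      nlinarith
    nlinarith [mul_lt_mul_of_pos_left hdiv hK]
  · intro h c c' hc hc'
    have hA : 2 * (r:ℝ) * p₁ - (2 + s) = 0 := by
      rw [h]; field_simp; ring
    have h0 : 4 * (r:ℝ) * ((r:ℝ) - 1) * (S - 1/2) = 0 := by
      rw [hkey, hA, zero_mul]
    have hS12 : S = 1/2 := by
      rcases mul_eq_zero.mp h0 with h1 | h1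
      · nlinarith
      · linarith
    rw [hrand c hc, hrand c' hc', hS12]
    norm_num
  · intro h c c' hc hcc'
    have hc' : 2 ≤ c' := by omega
    have hcR : (2:ℝ) ≤ (c:ℝ) := by exact_mod_cast hc
    have hccR : (c:ℝ) < (c':ℝ) := by exact_mod_cast hcc'
    have hA : p₁ * (2 * (r:ℝ)) < 2 + s := (lt_div_iff₀ (by linarith)).mp h
    have hB : 0 < 2 * (r:ℝ) * p₁ - (2 - s) := by nlinarith
    have hS12 : S < 1/2 := by
      nlinarith [mul_pos (show (0:ℝ) < (2 + s) - 2 * (r:ℝ) * p₁ by linarith) hB,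
        mul_pos (show (0:ℝ) < 4 * (r:ℝ) by linarith) (show (0:ℝ) < (r:ℝ) - 1 by linarith)]
    rw [hrand c hc, hrand c' hc']
    have hdiv : (2 - 4 * S) / (c':ℝ) < (2 - 4 * S) / (c:ℝ) := by
      rw [div_lt_div_iff₀ (by linarith) (by linarith)]
      nlinarith
    nlinarith [mul_lt_mul_of_pos_left hdiv hK]
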